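/- Let p be an odd prime and l, n ≥ 1 positive integers. Then there exists no generalized bent function f : Z_2^n → Z_{p^l}. -/

import Mathlib

open Finset

/-- The primitive `m`-th root of unity `e^{2πi/m}`. -/
noncomputable def zeta (m : ℕ) : ℂ := Complex.exp (2 * Real.pi * Complex.I / m)

/-- The inner product `x·y = Σ xᵢ yᵢ` in `Z₂`. -/
def bdot {n : ℕ} (x y : Fin n → ZMod 2) : ZMod 2 := ∑ i, x i * y i

/-- The Fourier coefficient `W_f(y) = Σ_x (-1)^{x·y} ζ_m^{f(x)}`. -/
noncomputable def Wf {n m : ℕ} (f : (Fin n → ZMod 2) → ZMod m) (y : Fin n → ZMod 2) : ℂ :=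
  ∑ x : Fin n → ZMod 2, (-1 : ℂ) ^ (bdot x y).val * zeta m ^ (f x).val

/-- `f : Z₂ⁿ → Z_m` is a generalized bent function of type `{m,n}` if
`|W_f(y)| = 2^{n/2}` for all `y`. -/
def IsGBF {n m : ℕ} (f : (Fin n → ZMod 2) → ZMod m) : Prop :=
  ∀ y : Fin n → ZMod 2, ‖Wf f y‖ = (2 : ℝ) ^ ((n : ℝ) / 2)

lemma neg_one_pow_mod_two (k : ℕ) : ((-1 : ℂ)) ^ (k % 2) = (-1) ^ k := by
  conv_rhs => rw [← Nat.div_add_mod k 2]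
  rw [pow_add, pow_mul]
  norm_num

lemma chi_add (a b : ZMod 2) : ((-1 : ℂ)) ^ ((a + b).val) = (-1) ^ a.val * (-1) ^ b.val := by
  rw [ZMod.val_add, neg_one_pow_mod_two, pow_add]

lemma chi_sum {ι : Type*} (s : Finset ι) (g : ι → ZMod 2) :
    ((-1 : ℂ)) ^ ((∑ i ∈ s, g i).val) = ∏ i ∈ s, ((-1 : ℂ)) ^ ((g i).val) := by
  induction s using Finset.cons_induction with
  | empty => simp
  | cons i s hi ih => rw [Finset.sum_cons, Finset.prod_cons, chi_add, ih]

lemma zmod2_cases (a : ZMod 2) : a = 0 ∨ a = 1 := by revert a; decide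

lemma zmod2_univ : (univ : Finset (ZMod 2)) = {0, 1} := by decide

lemma sum_chi {n : ℕ} (w : Fin n → ZMod 2) :
    (∑ y : Fin n → ZMod 2, ((-1 : ℂ)) ^ ((bdot w y).val)) = if w = 0 then (2 : ℂ) ^ n else 0 := by
  classical
  have h1 : ∀ y : Fin n → ZMod 2, ((-1:ℂ)) ^ ((bdot w y).val) = ∏ i, ((-1:ℂ)) ^ ((w i * y i).val) :=
    fun y => chi_sum _ _
  simp_rw [h1]
  rw [← Fintype.piFinset_univ, ← Finset.prod_univ_sum (fun _ => (univ : Finset (ZMod 2))) (fun i t => ((-1:ℂ)) ^ ((w i * t).val))]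
  have h2 : ∀ i, (∑ t : ZMod 2, ((-1:ℂ)) ^ ((w i * t).val)) = if w i = 0 then 2 else 0 := by
    intro i
    rw [zmod2_univ, Finset.sum_insert (by decide), Finset.sum_singleton, mul_zero, mul_one]
    rcases zmod2_cases (w i) with h | h <;> rw [h] <;> norm_num [show ((1:ZMod 2)).val = 1 from rfl, show ((0:ZMod 2)).val = 0 from rfl]
  simp_rw [h2]
  by_cases hw : w = 0
  · simp [hw]
  · rw [if_neg hw]
    obtain ⟨i, hi⟩ : ∃ i, w i ≠ 0 := by
      by_contra h; push_neg at h; exact hw (funext h)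
    exact Finset.prod_eq_zero (mem_univ i) (if_neg hi)

lemma zeta_prim {m : ℕ} (hm : m ≠ 0) : IsPrimitiveRoot (zeta m) m :=
  Complex.isPrimitiveRoot_exp m hm

lemma zeta_pow_val_add {m : ℕ} (hm : m ≠ 0) (a b : ZMod m) :
    zeta m ^ ((a + b).val) = zeta m ^ a.val * zeta m ^ b.val := by
  haveI : NeZero m := ⟨hm⟩
  rw [ZMod.val_add, ← pow_add]
  conv_rhs => rw [← Nat.div_add_mod (a.val + b.val) m]
  rw [pow_add, pow_mul, (zeta_prim hm).pow_eq_one, one_pow, one_mul]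

lemma zeta_abs {m : ℕ} (hm : m ≠ 0) : ‖zeta m‖ = 1 :=
  Complex.norm_eq_one_of_pow_eq_one (zeta_prim hm).pow_eq_one hm

lemma zeta_mul_conj {m : ℕ} (hm : m ≠ 0) (a b : ZMod m) :
    zeta m ^ a.val * (starRingEnd ℂ) (zeta m ^ b.val) = zeta m ^ ((a - b).val) := by
  have h2 : zeta m ^ b.val * (starRingEnd ℂ) (zeta m ^ b.val) = 1 := by
    rw [Complex.mul_conj, Complex.normSq_eq_norm_sq, norm_pow, zeta_abs hm]
    norm_num
  calc zeta m ^ a.val * (starRingEnd ℂ) (zeta m ^ b.val)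
      = zeta m ^ ((a - b).val) * (zeta m ^ b.val * (starRingEnd ℂ) (zeta m ^ b.val)) := by
        rw [← mul_assoc, ← zeta_pow_val_add hm, sub_add_cancel]
    _ = zeta m ^ ((a - b).val) := by rw [h2, mul_one]

lemma bdot_add_left {n : ℕ} (a b y : Fin n → ZMod 2) :
    bdot (a + b) y = bdot a y + bdot b y := by
  unfold bdot
  rw [← Finset.sum_add_distrib]
  exact Finset.sum_congr rfl fun i _ => by simp [add_mul]

lemma self_add_self {n : ℕ} (v : Fin n → ZMod 2) : v + v = 0 := by
  funext i
  have h : ∀ a : ZMod 2, a + a = 0 := by decide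
  exact h (v i)

lemma addz_iff {n : ℕ} (x x' z : Fin n → ZMod 2) : x + x' + z = 0 ↔ x' = x + z := by
  have hself : ∀ v : Fin n → ZMod 2, v + v = 0 := self_add_self
  constructor
  · intro h
    have hneg : -(x + z) = x + z := neg_eq_of_add_eq_zero_left (hself (x + z))
    have : x' = -(x + z) := by
      apply eq_neg_of_add_eq_zero_right
      rw [← h]; abel
    rw [this, hneg]
  · rintro rfl
    have : x + (x + z) + z = (x + x) + (z + z) := by abel
    rw [this, hself, hself, add_zero]

lemma gbf_corr {n m : ℕ} (hm : m ≠ 0) (f : (Fin n → ZMod 2) → ZMod m) (hf : IsGBF f)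
    {z : Fin n → ZMod 2} (hz : z ≠ 0) :
    ∑ x : Fin n → ZMod 2, zeta m ^ ((f x - f (x + z)).val) = 0 := by
  classical
  have hWabs : ∀ y, Wf f y * (starRingEnd ℂ) (Wf f y) = (2 : ℂ) ^ n := by
    intro y
    have hr : ((2:ℝ) ^ ((n:ℝ)/2)) ^ (2:ℕ) = (2:ℝ) ^ n := by
      rw [← Real.rpow_natCast ((2:ℝ) ^ ((n:ℝ)/2)) 2, ← Real.rpow_mul (by norm_num),
        show (n:ℝ)/2 * ((2:ℕ):ℝ) = (n:ℝ) by push_cast; ring]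
      exact Real.rpow_natCast 2 n
    rw [Complex.mul_conj, Complex.normSq_eq_norm_sq, hf y, hr]
    push_cast
    ring
  -- the correlation sum
  have hzero : ∑ y : Fin n → ZMod 2, ((-1:ℂ)) ^ ((bdot z y).val) * (Wf f y * (starRingEnd ℂ) (Wf f y)) = 0 := by
    simp_rw [hWabs]
    rw [← Finset.sum_mul, sum_chi, if_neg hz, zero_mul]
  have hexp : ∀ y, ((-1:ℂ)) ^ ((bdot z y).val) * (Wf f y * (starRingEnd ℂ) (Wf f y))
      = ∑ x : Fin n → ZMod 2, ∑ x' : Fin n → ZMod 2,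
          ((-1:ℂ)) ^ ((bdot (x + x' + z) y).val) * (zeta m ^ (f x).val * (starRingEnd ℂ) (zeta m ^ (f x').val)) := by
    intro y
    unfold Wf
    rw [map_sum, Finset.sum_mul_sum, Finset.mul_sum]
    refine Finset.sum_congr rfl fun x _ => ?_
    rw [Finset.mul_sum]
    refine Finset.sum_congr rfl fun x' _ => ?_
    rw [map_mul]
    have hconj : (starRingEnd ℂ) (((-1:ℂ)) ^ ((bdot x' y).val)) = ((-1:ℂ)) ^ ((bdot x' y).val) := by
      rw [map_pow, map_neg, map_one]
    rw [hconj, bdot_add_left, bdot_add_left, chi_add, chi_add]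
    ring
  rw [Finset.sum_congr rfl fun y _ => hexp y] at hzero
  rw [Finset.sum_comm] at hzero
  have hswap : ∀ x : Fin n → ZMod 2,
      (∑ y : Fin n → ZMod 2, ∑ x' : Fin n → ZMod 2,
        ((-1:ℂ)) ^ ((bdot (x + x' + z) y).val) * (zeta m ^ (f x).val * (starRingEnd ℂ) (zeta m ^ (f x').val)))
      = (2:ℂ) ^ n * (zeta m ^ (f x).val * (starRingEnd ℂ) (zeta m ^ (f (x + z)).val)) := by
    intro x
    rw [Finset.sum_comm]
    have h1 : ∀ x' : Fin n → ZMod 2,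
        (∑ y : Fin n → ZMod 2, ((-1:ℂ)) ^ ((bdot (x + x' + z) y).val) * (zeta m ^ (f x).val * (starRingEnd ℂ) (zeta m ^ (f x').val)))
        = (if x' = x + z then (2:ℂ)^n else 0) * (zeta m ^ (f x).val * (starRingEnd ℂ) (zeta m ^ (f x').val)) := by
      intro x'
      rw [← Finset.sum_mul, sum_chi]
      congr 1
      exact if_congr (addz_iff x x' z) rfl rfl
    rw [Finset.sum_congr rfl fun x' _ => h1 x']
    simp_rw [ite_mul, zero_mul]
    rw [Finset.sum_ite_eq' univ (x + z) (fun x' => (2:ℂ)^n * (zeta m ^ (f x).val * (starRingEnd ℂ) (zeta m ^ (f x').val)))]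
    simp
  rw [Finset.sum_congr rfl fun x _ => hswap x] at hzero
  rw [← Finset.mul_sum] at hzero
  have h2n : ((2:ℂ))^n ≠ 0 := pow_ne_zero _ two_ne_zero
  have := (mul_eq_zero.mp hzero).resolve_left h2n
  calc ∑ x : Fin n → ZMod 2, zeta m ^ ((f x - f (x + z)).val)
      = ∑ x : Fin n → ZMod 2, zeta m ^ (f x).val * (starRingEnd ℂ) (zeta m ^ (f (x + z)).val) :=
        Finset.sum_congr rfl fun x _ => (zeta_mul_conj hm _ _).symm
    _ = 0 := this

theorem stmt6 {p l n : ℕ} (hp : p.Prime) (hodd : Odd p) (hl : 1 ≤ l) (hn : 1 ≤ n) :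
    ¬ ∃ f : (Fin n → ZMod 2) → ZMod (p ^ l), IsGBF f := by
  classical
  rintro ⟨f, hf⟩
  have hm : p ^ l ≠ 0 := pow_ne_zero _ hp.pos.ne'
  have hmpos : 0 < p ^ l := Nat.pos_of_ne_zero hm
  set z : Fin n → ZMod 2 := fun _ => 1 with hzdef
  have hz : z ≠ 0 := by
    intro h
    have := congrFun h ⟨0, hn⟩
    simp only [hzdef, Pi.zero_apply] at this
    exact one_ne_zero this
  have hsum := gbf_corr hm f hf hz
  set P : Polynomial ℤ := ∑ x : Fin n → ZMod 2, Polynomial.X ^ ((f x - f (x + z)).val) with hP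
  have hζ : IsPrimitiveRoot (zeta (p ^ l)) (p ^ l) := zeta_prim hm
  have hroot : Polynomial.aeval (zeta (p ^ l)) P = 0 := by
    rw [hP, map_sum]
    simpa [map_pow, Polynomial.aeval_X] using hsum
  have hdvd : Polynomial.cyclotomic (p ^ l) ℤ ∣ P := by
    rw [Polynomial.cyclotomic_eq_minpoly hζ hmpos]
    exact minpoly.isIntegrallyClosed_dvd (hζ.isIntegral hmpos) hroot
  obtain ⟨Q, hQ⟩ := hdvd
  have hevalP : P.eval 1 = 2 ^ n := by
    rw [hP, Polynomial.eval_finset_sum]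
    simp only [Polynomial.eval_pow, Polynomial.eval_X, one_pow]
    rw [Finset.sum_const, Finset.card_univ, nsmul_eq_mul, mul_one]
    rw [Fintype.card_fun, ZMod.card, Fintype.card_fin]
    push_cast
    ring
  have hevalc : (Polynomial.cyclotomic (p ^ l) ℤ).eval 1 = p := by
    obtain ⟨k, rfl⟩ : ∃ k, l = k + 1 := ⟨l - 1, (Nat.succ_pred_eq_of_pos hl).symm⟩
    haveI : Fact p.Prime := ⟨hp⟩
    exact Polynomial.eval_one_cyclotomic_prime_pow k
  have hdvd2 : (p : ℤ) ∣ 2 ^ n := by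
    rw [← hevalP, hQ, Polynomial.eval_mul, hevalc]
    exact Dvd.intro _ rfl
  have hpd : p ∣ 2 ^ n := by exact_mod_cast hdvd2
  have hp2 : p = 2 :=
    (Nat.prime_dvd_prime_iff_eq hp Nat.prime_two).mp (hp.dvd_of_dvd_pow hpd)
  rw [hp2] at hodd
  exact (Nat.not_odd_iff_even.mpr even_two) hodd
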